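/- If T is a complete first-order theory in a countable language such that the isolated types are dense in T (i.e., every formula consistent with T is implied modulo T by a formula that isolates a complete type), then T has a countable atomic model. -/

import Mathlib

open FirstOrder FirstOrder.Language

/-- A formula (in `n` free variables) is consistent with the theory `T` if it is realized by
some tuple in some model of `T`. -/
def ConsistentWith {L : FirstOrder.Language.{0,0}} (T : L.Theory) {n : ℕ} (φ : L.Formula (Fin n)) : Prop :=
  ∃ (M : Theory.ModelType.{0,0,0} T) (v : Fin n → M), φ.Realize v

/-- `φ` isolates a complete type in `T`: `T ∪ {∃x̄ φ}` is consistent, and for every formula `ψ`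
in the same variables, either `T ⊢ φ → ψ` or `T ⊢ φ → ¬ψ` (semantically). -/
def Isolates {L : FirstOrder.Language.{0,0}} (T : L.Theory) {n : ℕ} (φ : L.Formula (Fin n)) : Prop :=
  ConsistentWith T φ ∧
    ∀ ψ : L.Formula (Fin n),
      (∀ (M : Theory.ModelType.{0,0,0} T) (v : Fin n → M), φ.Realize v → ψ.Realize v) ∨
      (∀ (M : Theory.ModelType.{0,0,0} T) (v : Fin n → M), φ.Realize v → ¬ ψ.Realize v)

/-- The isolated types are dense in `T`: every formula consistent with `T` is implied, modulo
`T`, by a formula isolating a complete type. -/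
def IsolatedTypesDense {L : FirstOrder.Language.{0,0}} (T : L.Theory) : Prop :=
  ∀ (n : ℕ) (φ : L.Formula (Fin n)), ConsistentWith T φ →
    ∃ θ : L.Formula (Fin n), Isolates T θ ∧
      ∀ (M : Theory.ModelType.{0,0,0} T) (v : Fin n → M), θ.Realize v → φ.Realize v

/-- `M` is an atomic model of `T`: `M ⊨ T` and the type of every finite tuple from `M`
is isolated in `T`. -/
def IsAtomicModel {L : FirstOrder.Language.{0,0}} (T : L.Theory) (M : Type*) [L.Structure M] : Prop :=
  M ⊨ T ∧ ∀ (n : ℕ) (a : Fin n → M), ∃ φ : L.Formula (Fin n), φ.Realize a ∧ Isolates T φ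

namespace AtomicAux

variable {L : FirstOrder.Language.{0,0}} {T : L.Theory}

/-- Lift a bounded formula with `n+1` bound variables to a formula in `m+1` free
variables, plugging in variables `g i` for `i < n` and the last variable as witness. -/
noncomputable def liftφ {m n : ℕ} (φ : L.BoundedFormula Empty (n+1)) (g : Fin n → Fin m) :
    L.Formula (Fin (m+1)) :=
  φ.toFormula.relabel (Sum.elim Empty.elim
    (Fin.snoc (fun i => (g i).castSucc) (Fin.last m)))

lemma realize_liftφ {m n : ℕ} (φ : L.BoundedFormula Empty (n+1)) (g : Fin n → Fin m)
    {M : Type} [L.Structure M] (v : Fin m → M) (b : M) :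
    (liftφ φ g).Realize (Fin.snoc v b) ↔ φ.Realize default (Fin.snoc (v ∘ g) b) := by
  rw [liftφ, Formula.realize_relabel, BoundedFormula.realize_toFormula]
  have h1 : ((Fin.snoc v b ∘ Sum.elim Empty.elim
      (Fin.snoc (fun i => (g i).castSucc) (Fin.last m))) ∘ Sum.inl) = (default : Empty → M) :=
    funext fun e => e.elim
  have h2 : ((Fin.snoc v b ∘ Sum.elim Empty.elim
      (Fin.snoc (fun i => (g i).castSucc) (Fin.last m))) ∘ Sum.inr)
      = Fin.snoc (v ∘ g) b := by
    funext i
    refine Fin.lastCases ?_ (fun j => ?_) i <;>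
      simp [Function.comp_apply]
  rw [h1, h2]

end AtomicAux

namespace AtomicAux

variable {L : FirstOrder.Language.{0,0}} {T : L.Theory}

lemma step_core (hdense : IsolatedTypesDense T) (N : Theory.ModelType.{0,0,0} T)
    {m : ℕ} {χ : L.Formula (Fin m)} (hχ : Isolates T χ)
    {v : Fin m → N} (hv : χ.Realize v)
    {n : ℕ} (φ : L.BoundedFormula Empty (n+1)) (g : Fin n → Fin m)
    (hp : ∃ c : N, φ.Realize default (Fin.snoc (v ∘ g) c)) :
    ∃ (χ' : L.Formula (Fin (m+1))) (b : N),
      Isolates T χ' ∧ χ'.Realize (Fin.snoc v b) ∧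
        φ.Realize default (Fin.snoc (v ∘ g) b) := by
  classical
  set ψ : L.Formula (Fin (m+1)) := (χ.relabel Fin.castSucc) ⊓ liftφ φ g with hψdef
  have hψr : ∀ (M : Theory.ModelType.{0,0,0} T) (u : Fin m → M) (b : M),
      ψ.Realize (Fin.snoc u b) ↔ χ.Realize u ∧ φ.Realize default (Fin.snoc (u ∘ g) b) := by
    intro M u b
    rw [hψdef, Formula.realize_inf, Formula.realize_relabel, realize_liftφ]
    have h : (Fin.snoc u b ∘ Fin.castSucc : Fin m → M) = u := by
      funext j; simp
    rw [h]
  have hcons : ConsistentWith T ψ := by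
    obtain ⟨c, hc⟩ := hp
    exact ⟨N, Fin.snoc v c, (hψr N v c).2 ⟨hv, hc⟩⟩
  obtain ⟨θ, hθiso, hθimp⟩ := hdense (m+1) ψ hcons
  set f : Fin (m+1) → Fin m ⊕ Fin 1 :=
    fun i => Fin.lastCases (Sum.inr 0) Sum.inl i with hf
  set ξ : L.Formula (Fin m) := (θ.relabel f).iExs (Fin 1) with hξdef
  have hξr : ∀ (M : Theory.ModelType.{0,0,0} T) (u : Fin m → M),
      ξ.Realize u ↔ ∃ b : M, θ.Realize (Fin.snoc u b) := by
    intro M u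
    rw [hξdef, Formula.realize_iExs]
    simp only [Formula.realize_relabel, Function.comp_def]
    constructor
    · rintro ⟨i, hi⟩
      refine ⟨i 0, ?_⟩
      have h : (fun a => Sum.elim u i (f a)) = Fin.snoc u (i 0) := by
        funext a
        refine Fin.lastCases ?_ (fun j => ?_) a <;> simp [hf]
      rwa [h] at hi
    · rintro ⟨b, hb⟩
      refine ⟨fun _ => b, ?_⟩
      have h : (fun a => Sum.elim u (fun _ : Fin 1 => b) (f a)) = Fin.snoc u b := by
        funext a
        refine Fin.lastCases ?_ (fun j => ?_) a <;> simp [hf]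
      rw [h]; exact hb
  rcases hχ.2 ξ with hpos | hneg
  · have hξv : ξ.Realize v := hpos N v hv
    rw [hξr N v] at hξv
    obtain ⟨b, hb⟩ := hξv
    have hψb := hθimp N (Fin.snoc v b) hb
    rw [hψr N v b] at hψb
    exact ⟨θ, b, hθiso, hb, hψb.2⟩
  · exfalso
    obtain ⟨M', w, hw⟩ := hθiso.1
    have hweq : (Fin.snoc (w ∘ Fin.castSucc : Fin m → M') (w (Fin.last m))) = w := by
      funext i
      refine Fin.lastCases ?_ (fun j => ?_) i <;> simp
    have hψw := hθimp M' w hw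
    rw [← hweq] at hψw hw
    rw [hψr M' _ _] at hψw
    exact hneg M' _ hψw.1 ((hξr M' _).2 ⟨w (Fin.last m), hw⟩)

lemma step_lemma (hdense : IsolatedTypesDense T) (N : Theory.ModelType.{0,0,0} T)
    {m : ℕ} {χ : L.Formula (Fin m)} (hχ : Isolates T χ)
    {v : Fin m → N} (hv : χ.Realize v)
    {n : ℕ} (φ : L.BoundedFormula Empty (n+1)) (g : Fin n → Fin m) :
    ∃ (χ' : L.Formula (Fin (m+1))) (b : N),
      Isolates T χ' ∧ χ'.Realize (Fin.snoc v b) ∧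
        ((∃ c : N, φ.Realize default (Fin.snoc (v ∘ g) c)) →
          φ.Realize default (Fin.snoc (v ∘ g) b)) := by
  classical
  by_cases hp : ∃ c : N, φ.Realize default (Fin.snoc (v ∘ g) c)
  · obtain ⟨χ', b, h1, h2, h3⟩ := step_core hdense N hχ hv φ g hp
    exact ⟨χ', b, h1, h2, fun _ => h3⟩
  · obtain ⟨χ', b, h1, h2, -⟩ := step_core hdense N hχ hv
      (⊤ : L.BoundedFormula Empty (n+1)) g ⟨Classical.arbitrary N, by simp⟩
    exact ⟨χ', b, h1, h2, fun h => absurd h hp⟩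

end AtomicAux

namespace AtomicAux

variable {L : FirstOrder.Language.{0,0}} {T : L.Theory}

lemma tuple_isolated {k n : ℕ} {χ : L.Formula (Fin k)} (hχ : Isolates T χ)
    (g : Fin n → Fin k) :
    ∃ θ : L.Formula (Fin n), Isolates T θ ∧
      ∀ (M : Theory.ModelType.{0,0,0} T) (w : Fin k → M),
        χ.Realize w → θ.Realize (w ∘ g) := by
  classical
  set ρ : L.Formula (Fin n ⊕ Fin k) :=
    (χ.relabel Sum.inr) ⊓
      BoundedFormula.iInf
        (fun j : Fin n => Term.equal (Term.var (Sum.inl j)) (Term.var (Sum.inr (g j)))) with hρdef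
  set θ : L.Formula (Fin n) := ρ.iExs (Fin k) with hθdef
  have hρr : ∀ (M : Type) [L.Structure M] (u : Fin n → M) (w : Fin k → M),
      ρ.Realize (Sum.elim u w) ↔ (χ.Realize w ∧ ∀ j, u j = w (g j)) := by
    intro M _ u w
    rw [hρdef, Formula.realize_inf, Formula.realize_relabel]
    have h : (Sum.elim u w ∘ Sum.inr : Fin k → M) = w := rfl
    rw [h]
    constructor
    · rintro ⟨h1, h2⟩
      refine ⟨h1, fun j => ?_⟩
      have := BoundedFormula.realize_iInf.1 h2 j
      simpa [Term.equal, BoundedFormula.realize_bdEqual] using this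
    · rintro ⟨h1, h2⟩
      refine ⟨h1, BoundedFormula.realize_iInf.2 fun j => ?_⟩
      simpa [Term.equal, BoundedFormula.realize_bdEqual] using h2 j
  have hθr : ∀ (M : Type) [L.Structure M] (u : Fin n → M),
      θ.Realize u ↔ ∃ w : Fin k → M, χ.Realize w ∧ ∀ j, u j = w (g j) := by
    intro M _ u
    rw [hθdef, Formula.realize_iExs]
    constructor
    · rintro ⟨w, hw⟩
      exact ⟨w, (hρr M u w).1 hw⟩
    · rintro ⟨w, hw⟩
      exact ⟨w, (hρr M u w).2 hw⟩
  have himp : ∀ (M : Theory.ModelType.{0,0,0} T) (w : Fin k → M),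
      χ.Realize w → θ.Realize (w ∘ g) :=
    fun M w hw => (hθr M _).2 ⟨w, hw, fun j => rfl⟩
  refine ⟨θ, ⟨?_, ?_⟩, himp⟩
  · obtain ⟨M, w, hw⟩ := hχ.1
    exact ⟨M, w ∘ g, himp M w hw⟩
  · intro ψ0
    rcases hχ.2 (ψ0.relabel g) with hp | hp
    · left
      intro M u hu
      obtain ⟨w, hw, he⟩ := (hθr M u).1 hu
      have h1 := hp M w hw
      rw [Formula.realize_relabel] at h1
      rw [show u = w ∘ g from funext he]
      exact h1
    · right
      intro M u hu
      obtain ⟨w, hw, he⟩ := (hθr M u).1 hu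
      have h1 := hp M w hw
      rw [Formula.realize_relabel] at h1
      rw [show u = w ∘ g from funext he]
      exact h1

/-- The type of Henkin tasks. -/
abbrev TaskT (L : FirstOrder.Language.{0,0}) : Type :=
  Σ n : ℕ, L.BoundedFormula Empty (n+1) × (Fin n → ℕ)

lemma countable_formulas [Countable L.Symbols] :
    Countable (Σ n, L.BoundedFormula Empty n) := by
  have h := BoundedFormula.card_le (L := L) (α := Empty)
  refine Cardinal.mk_le_aleph0_iff.1 (h.trans (max_le le_rfl ?_))
  have h1 : Cardinal.lift.{0,0} (Cardinal.mk Empty) ≤ Cardinal.aleph0 := by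
    simp
  have h2 : Cardinal.lift.{0,0} L.card ≤ Cardinal.aleph0 := by
    rw [Cardinal.lift_id]
    exact Cardinal.mk_le_aleph0
  calc Cardinal.lift.{0,0} (Cardinal.mk Empty) + Cardinal.lift.{0,0} L.card
      ≤ Cardinal.aleph0 + Cardinal.aleph0 := add_le_add h1 h2
    _ = Cardinal.aleph0 := Cardinal.aleph0_add_aleph0

lemma countable_taskT [Countable L.Symbols] : Countable (TaskT L) := by
  haveI h0 : Countable (Σ n, L.BoundedFormula Empty n) := countable_formulas
  haveI : ∀ m : ℕ, Countable (L.BoundedFormula Empty m) :=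
    fun m => (sigma_mk_injective (i := m)).countable
  infer_instance

end AtomicAux

/-- a complete theory in a countable language in which the isolated types are
dense has a countable atomic model. -/
theorem statement0 {L : FirstOrder.Language.{0,0}} [Countable L.Symbols] (T : L.Theory)
    (hT : T.IsComplete) (hdense : IsolatedTypesDense T) :
    ∃ (M : Type) (_ : L.Structure M), Countable M ∧ Nonempty M ∧ IsAtomicModel T M := by
  classical
  -- initial isolating formula and ambient model
  have con_top : ConsistentWith T (⊤ : L.Formula (Fin 0)) := by
    obtain ⟨M0⟩ := hT.1
    exact ⟨M0, default, by simp⟩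
  obtain ⟨θ₀, hθ₀, -⟩ := hdense 0 ⊤ con_top
  obtain ⟨N, v0, hv0⟩ := hθ₀.1
  -- task enumeration hitting every task at arbitrarily late stages
  haveI : Countable (AtomicAux.TaskT L) := AtomicAux.countable_taskT
  haveI : Nonempty (AtomicAux.TaskT L) := ⟨⟨0, (⊤, Fin.elim0)⟩⟩
  obtain ⟨e, he⟩ := exists_surjective_nat (AtomicAux.TaskT L)
  set τ : ℕ → AtomicAux.TaskT L := fun j => e (Nat.unpair j).2 with hτdef
  have hit : ∀ (t : AtomicAux.TaskT L) (k₀ : ℕ), ∃ j, k₀ ≤ j ∧ τ j = t := by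
    intro t k₀
    obtain ⟨i, hi⟩ := he t
    exact ⟨Nat.pair k₀ i, Nat.left_le_pair _ _, by simp [hτdef, Nat.unpair_pair, hi]⟩
  -- the recursive construction
  let St : ℕ → Type := fun k =>
    {p : L.Formula (Fin k) × (Fin k → N) // Isolates T p.1 ∧ p.1.Realize p.2}
  have next : ∀ (k : ℕ) (s : St k), ∃ s' : St (k+1),
      s'.1.2 = Fin.snoc s.1.2 (s'.1.2 (Fin.last k)) ∧
      ∀ (h : ∀ i, ((τ k).2.2 i) < k),
        (∃ c : N, ((τ k).2.1).Realize default
            (Fin.snoc (fun i => s.1.2 ⟨(τ k).2.2 i, h i⟩) c)) →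
          ((τ k).2.1).Realize default
            (Fin.snoc (fun i => s.1.2 ⟨(τ k).2.2 i, h i⟩) (s'.1.2 (Fin.last k))) := by
    intro k s
    by_cases hap : ∀ i, ((τ k).2.2 i) < k
    · obtain ⟨χ', b, h1, h2, h3⟩ := AtomicAux.step_lemma hdense N s.2.1 s.2.2 (τ k).2.1
        (fun i => ⟨(τ k).2.2 i, hap i⟩)
      have e1 : Fin.snoc s.1.2 b
          = (Fin.snoc s.1.2 ((Fin.snoc s.1.2 b : Fin (k+1) → N) (Fin.last k)) :
              Fin (k+1) → N) := by
        rw [Fin.snoc_last]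
      have e2 : ∀ (h : ∀ i, ((τ k).2.2 i) < k),
          (∃ c : N, ((τ k).2.1).Realize default
              (Fin.snoc (fun i => s.1.2 ⟨(τ k).2.2 i, h i⟩) c)) →
            ((τ k).2.1).Realize default
              (Fin.snoc (fun i => s.1.2 ⟨(τ k).2.2 i, h i⟩)
                ((Fin.snoc s.1.2 b : Fin (k+1) → N) (Fin.last k))) := by
        intro h hc
        rw [Fin.snoc_last]
        exact h3 hc
      exact ⟨⟨(χ', Fin.snoc s.1.2 b), h1, h2⟩, e1, e2⟩
    · obtain ⟨χ', b, h1, h2, -⟩ := AtomicAux.step_lemma hdense N s.2.1 s.2.2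
        (⊤ : L.BoundedFormula Empty 1) (Fin.elim0)
      have e1 : Fin.snoc s.1.2 b
          = (Fin.snoc s.1.2 ((Fin.snoc s.1.2 b : Fin (k+1) → N) (Fin.last k)) :
              Fin (k+1) → N) := by
        rw [Fin.snoc_last]
      exact ⟨⟨(χ', Fin.snoc s.1.2 b), h1, h2⟩, e1, fun h => absurd h hap⟩
  choose nextF hsnoc hhenkin using next
  let s : ∀ k, St k := fun k => Nat.rec ⟨(θ₀, v0), hθ₀, hv0⟩ (fun k ih => nextF k ih) k
  let a : ℕ → N := fun j => (s (j+1)).1.2 (Fin.last j)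
  have hs_succ : ∀ k, (s (k+1)).1.2 = Fin.snoc (s k).1.2 (a k) := fun k => hsnoc k (s k)
  have hcoh : ∀ (k : ℕ) (i : Fin k), (s k).1.2 i = a i.val := by
    intro k
    induction k with
    | zero => exact fun i => i.elim0
    | succ k ih =>
      intro i
      refine Fin.lastCases ?_ (fun j => ?_) i
      · rfl
      · rw [hs_succ k, Fin.snoc_castSucc]
        exact ih j
  -- the key Henkin property
  have key : ∀ (n : ℕ) (φ : L.BoundedFormula Empty (n+1)) (g : Fin n → ℕ) (k : ℕ),
      τ k = ⟨n, (φ, g)⟩ → (∀ i, g i < k) →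
      (∃ c : N, φ.Realize default (Fin.snoc (fun i => a (g i)) c)) →
        φ.Realize default (Fin.snoc (fun i => a (g i)) (a k)) := by
    intro n φ g k htk hlt hex
    have H := hhenkin k (s k)
    rw [htk] at H
    have hv : (fun i => (s k).1.2 ⟨g i, hlt i⟩) = fun i => a (g i) :=
      funext fun i => hcoh k ⟨g i, hlt i⟩
    have H2 := H hlt
    rw [hv] at H2
    exact H2 hex
  -- the substructure of all chosen elements
  have closedFun : ∀ {nn : ℕ} (f : L.Functions nn) (x : Fin nn → N),
      (∀ i, x i ∈ Set.range a) → Structure.funMap f x ∈ Set.range a := by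
    intro nn f x hx
    choose g hg using hx
    set φf : L.BoundedFormula Empty (nn+1) :=
      Term.bdEqual (Term.var (Sum.inr (Fin.last nn)))
        (Term.func f (fun i => Term.var (Sum.inr i.castSucc))) with hφf
    have hφfr : ∀ (w : Fin (nn+1) → N),
        φf.Realize default w ↔
          w (Fin.last nn) = Structure.funMap f (fun i => w i.castSucc) := by
      intro w
      simp [hφf, BoundedFormula.realize_bdEqual, Term.realize]
    obtain ⟨k, hk, htk⟩ := hit ⟨nn, (φf, g)⟩ ((Finset.univ.sup g) + 1)
    have hlt : ∀ i, g i < k := fun i =>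
      lt_of_lt_of_le (Nat.lt_succ_of_le (Finset.le_sup (Finset.mem_univ i))) hk
    have hex : ∃ c : N, φf.Realize default (Fin.snoc (fun i => a (g i)) c) := by
      refine ⟨Structure.funMap f (fun i => a (g i)), ?_⟩
      rw [hφfr]
      simp
    have hres := key nn φf g k htk hlt hex
    rw [hφfr] at hres
    have h5 : a k = Structure.funMap f (fun i => a (g i)) := by
      simpa using hres
    refine ⟨k, ?_⟩
    rw [h5]
    exact congrArg _ (funext fun i => hg i)
  let S : L.Substructure N := ⟨Set.range a, fun {nn} f x hx => closedFun f x hx⟩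
  -- Tarski-Vaught
  have htv : ∀ (nn : ℕ) (φ : L.BoundedFormula Empty (nn + 1)) (x : Fin nn → S) (c : N),
      φ.Realize default (Fin.snoc ((↑) ∘ x) c : _ → N) →
        ∃ b : S, φ.Realize default (Fin.snoc ((↑) ∘ x) (b : N) : _ → N) := by
    intro nn φ x c hc
    have h2 : ∀ i, ∃ j, a j = (x i : N) := fun i => (x i).2
    choose g hg using h2
    obtain ⟨k, hk, htk⟩ := hit ⟨nn, (φ, g)⟩ ((Finset.univ.sup g) + 1)
    have hlt : ∀ i, g i < k := fun i =>
      lt_of_lt_of_le (Nat.lt_succ_of_le (Finset.le_sup (Finset.mem_univ i))) hk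
    have hx : (fun i => a (g i)) = ((↑) ∘ x : Fin nn → N) := funext fun i => hg i
    have hres := key nn φ g k htk hlt (by rw [hx]; exact ⟨c, hc⟩)
    rw [hx] at hres
    exact ⟨⟨a k, ⟨k, rfl⟩⟩, hres⟩
  let ES : L.ElementarySubstructure N := S.toElementarySubstructure htv
  refine ⟨ES, inferInstance, ?_, ⟨⟨a 0, ⟨0, rfl⟩⟩⟩, ?_, ?_⟩
  · -- countable
    have hsurj : Function.Surjective (fun j : ℕ => (⟨a j, ⟨j, rfl⟩⟩ : ES)) := by
      rintro ⟨y, hy⟩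
      obtain ⟨j, hj⟩ := hy
      exact ⟨j, Subtype.ext hj⟩
    exact hsurj.countable
  · -- models T
    exact (ES.theory_model_iff T).2 N.is_model
  · -- atomic
    intro nn b
    have h2 : ∀ i, ∃ j, a j = (b i : N) := fun i => (b i).2
    choose g hg using h2
    set k := (Finset.univ.sup g) + 1 with hkdef
    have hlt : ∀ i, g i < k := fun i =>
      Nat.lt_succ_of_le (Finset.le_sup (Finset.mem_univ i))
    obtain ⟨θ, hθiso, hθimp⟩ := AtomicAux.tuple_isolated (s k).2.1
      (fun i => (⟨g i, hlt i⟩ : Fin k))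
    have h3 := hθimp N (s k).1.2 (s k).2.2
    have h4 : ((s k).1.2 ∘ fun i => (⟨g i, hlt i⟩ : Fin k)) = ((↑) ∘ b : Fin nn → N) :=
      funext fun i => (hcoh k _).trans (hg i)
    rw [h4] at h3
    exact ⟨θ, (ES.isElementary θ b).1 h3, hθiso⟩
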